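/- Let R be a commutative ring, n ≥ 1, and let M ∈ GL_n(R) with inverse N = M^{-1}. Then the ideal of R generated by the off-diagonal entries of the first row of M, i.e. ⟨M_{1,2}, …, M_{1,n}⟩, equals the ideal generated by the off-diagonal entries of the first row of N, i.e. ⟨N_{1,2}, …, N_{1,n}⟩. -/
import Mathlib

lemma aux_row_span_le {R : Type*} [CommRing R] {n : ℕ}
    (M N : Matrix (Fin (n + 1)) (Fin (n + 1)) R)
    (hNM : N * M = 1) :
    Ideal.span {x : R | ∃ j : Fin (n + 1), j ≠ 0 ∧ x = M 0 j} ≤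
      Ideal.span {x : R | ∃ j : Fin (n + 1), j ≠ 0 ∧ x = N 0 j} := by
  set I := Ideal.span {x : R | ∃ j : Fin (n + 1), j ≠ 0 ∧ x = N 0 j} with hI
  rw [Ideal.span_le]
  rintro x ⟨j, hj, rfl⟩
  have hmem : ∀ k : Fin (n + 1), k ≠ 0 → N 0 k ∈ I := fun k hk =>
    Ideal.subset_span ⟨k, hk, rfl⟩
  have h1 : ∑ k, N 0 k * M k 0 = 1 := by
    have := congrFun (congrFun hNM 0) 0
    simpa [Matrix.mul_apply, Matrix.one_apply] using this
  have h2 : ∑ k, N 0 k * M k j = 0 := by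
    have := congrFun (congrFun hNM 0) j
    simpa [Matrix.mul_apply, Matrix.one_apply, Ne.symm hj] using this
  have hsum : ∑ k, N 0 k * (M k 0 * M 0 j - M 0 0 * M k j) = M 0 j := by
    have : ∑ k, N 0 k * (M k 0 * M 0 j - M 0 0 * M k j)
        = (∑ k, N 0 k * M k 0) * M 0 j - M 0 0 * ∑ k, N 0 k * M k j := by
      rw [Finset.sum_mul, Finset.mul_sum, ← Finset.sum_sub_distrib]
      exact Finset.sum_congr rfl fun k _ => by ring
    rw [this, h1, h2]; ring
  show M 0 j ∈ I
  rw [← hsum]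
  refine Ideal.sum_mem _ fun k _ => ?_
  rcases eq_or_ne k 0 with rfl | hk
  · have : N 0 0 * (M 0 0 * M 0 j - M 0 0 * M 0 j) = 0 := by ring
    rw [this]; exact I.zero_mem
  · exact I.mul_mem_right _ (hmem k hk)

/-- For an invertible matrix `M` with inverse `N`, the ideal generated by the
off-diagonal entries of the first row of `M` equals the ideal generated by the
off-diagonal entries of the first row of `N`. -/
theorem stmt1 {R : Type*} [CommRing R] {n : ℕ}
    (M N : Matrix (Fin (n + 1)) (Fin (n + 1)) R)
    (hMN : M * N = 1) (hNM : N * M = 1) :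
    Ideal.span {x : R | ∃ j : Fin (n + 1), j ≠ 0 ∧ x = M 0 j} =
      Ideal.span {x : R | ∃ j : Fin (n + 1), j ≠ 0 ∧ x = N 0 j} := by
  exact le_antisymm (aux_row_span_le M N hNM) (aux_row_span_le N M hMN)
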